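/- Let C ⊆ V be a proper cone with base B = C ∩ {v | ⟨e,v⟩ = 1} for some e in the interior of C*. Let b₁, b₂ ∈ B and set m := inf_C(b₁/b₂) and M := sup_C(b₁/b₂); assume 0 < m < M < ∞. Then (1/2)‖b₁−b₂‖_B = N_B(b₁−b₂) ≤ (M−1)(1−m)/(M−m) ≤ 1/(1+m) − 1/(1+M) ≤ tanh(h_C(b₁,b₂)/4). -/

import Mathlib

noncomputable section

variable {V : Type*} [NormedAddCommGroup V] [InnerProductSpace ℝ V]

/-- A proper cone: closed, convex, closed under nonnegative scaling, pointed and solid. -/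
def IsProperCone (C : Set V) : Prop :=
  IsClosed C ∧ Convex ℝ C ∧ (∀ (r : ℝ), 0 ≤ r → ∀ x ∈ C, r • x ∈ C) ∧
    (C ∩ (-C) = {0}) ∧ (Submodule.span ℝ C = ⊤)

/-- `sup_C(a/b) := inf {λ : ℝ | λ • b - a ∈ C}`, as an extended real (`⊤` if no such `λ`). -/
def supRatio (C : Set V) (a b : V) : EReal :=
  sInf ((fun l : ℝ => (l : EReal)) '' {l : ℝ | l • b - a ∈ C})

/-- `inf_C(a/b) := sup {λ : ℝ | a - λ • b ∈ C}`. -/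
def infRatio (C : Set V) (a b : V) : EReal :=
  sSup ((fun l : ℝ => (l : EReal)) '' {l : ℝ | a - l • b ∈ C})

/-- Hilbert's projective metric `h_C(a,b) = ln (sup_C(a/b) * sup_C(b/a)) ∈ [0,∞]`. -/
def hilbertDist (C : Set V) (a b : V) : EReal :=
  if supRatio C a b = ⊤ ∨ supRatio C b a = ⊤ then ⊤
  else ((Real.log ((supRatio C a b).toReal * (supRatio C b a).toReal) : ℝ) : EReal)

/-- The oscillation `osc_C(a/b) = sup_C(a/b) - inf_C(a/b)`. -/
def oscRatio (C : Set V) (a b : V) : EReal :=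
  supRatio C a b - infRatio C a b

variable {V' : Type*} [NormedAddCommGroup V'] [InnerProductSpace ℝ V']

/-- The projective diameter `Δ(T)` of a cone-preserving linear map `T`. -/
def projDiam (C : Set V) (C' : Set V') (T : V →ₗ[ℝ] V') : EReal :=
  ⨆ (a : V) (_ : a ∈ C \ {0}) (b : V) (_ : b ∈ C \ {0}), hilbertDist C' (T a) (T b)

/-- `tanh(x/4)`, with the convention `tanh(⊤/4) = 1`. -/
def tanhQuarter (x : EReal) : ℝ :=
  if x = ⊤ then 1 else Real.tanh (x.toReal / 4)

/-- `tanh(x/2)`, with the convention `tanh(⊤/2) = 1`. -/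
def tanhHalf (x : EReal) : ℝ :=
  if x = ⊤ then 1 else Real.tanh (x.toReal / 2)

/-- The dual cone of `C` (identifying `V` with its dual via the inner product). -/
def dualConeSet (C : Set V) : Set V := {w : V | ∀ c ∈ C, 0 ≤ (inner ℝ w c : ℝ)}

/-- The base norm `‖v‖_B` induced by the cone `C` and the functional `⟨e, ·⟩`. -/
def baseNorm (C : Set V) (e : V) (v : V) : ℝ :=
  sInf {r : ℝ | ∃ cp ∈ C, ∃ cm ∈ C, v = cp - cm ∧ r = (inner ℝ e cp : ℝ) + (inner ℝ e cm : ℝ)}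

/-- The negativity `N_B(v)` induced by the cone `C` and the functional `⟨e, ·⟩`. -/
def negativity (C : Set V) (e : V) (v : V) : ℝ :=
  sInf {r : ℝ | ∃ cp ∈ C, ∃ cm ∈ C, v = cp - cm ∧ r = (inner ℝ e cm : ℝ)}


section AuxLemmas

lemma algIneq_aux {m M : ℝ} (hm0 : 0 < m) (hmM : m < M) :
    (M - 1) * (1 - m) / (M - m) ≤ 1 / (1 + m) - 1 / (1 + M) := by
  rw [div_sub_div _ _ (by nlinarith : (1:ℝ) + m ≠ 0) (by nlinarith : (1:ℝ) + M ≠ 0),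
    div_le_div_iff₀ (by linarith) (by nlinarith)]
  nlinarith [sq_nonneg (M * m - 1)]

lemma tanhBound_aux {m M : ℝ} (hm0 : 0 < m) (hmM : m < M) :
    1 / (1 + m) - 1 / (1 + M) ≤ Real.tanh (Real.log (M * m⁻¹) / 4) := by
  have hM0 : 0 < M := hm0.trans hmM
  set t := M * m⁻¹ with ht
  have ht1 : 1 < t := by rw [ht, ← div_eq_mul_inv]; exact (one_lt_div hm0).mpr hmM
  have ht0 : 0 < t := by linarith
  set E := Real.exp (Real.log t / 4) with hE
  have hE0 : 0 < E := Real.exp_pos _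
  have hE2 : E ^ 2 = Real.sqrt t := by
    have h1 : E ^ 2 = Real.exp (Real.log t / 2) := by
      rw [hE, sq, ← Real.exp_add]; ring_nf
    have h2 : (Real.exp (Real.log t / 2)) ^ 2 = t := by
      rw [sq, ← Real.exp_add, show Real.log t / 2 + Real.log t / 2 = Real.log t by ring,
        Real.exp_log ht0]
    rw [h1, show Real.sqrt t = Real.exp (Real.log t / 2) from by
      rw [← Real.sqrt_sq (Real.exp_pos (Real.log t / 2)).le, h2]]
  set s := Real.sqrt t with hs
  have hst : s ^ 2 = t := Real.sq_sqrt ht0.le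
  have hs1 : 1 < s := by nlinarith [Real.sqrt_nonneg t]
  have htanh : Real.tanh (Real.log t / 4) = (s - 1) / (s + 1) := by
    rw [Real.tanh_eq_sinh_div_cosh, Real.sinh_eq, Real.cosh_eq, Real.exp_neg, ← hE, ← hE2]
    have d1 : E + E⁻¹ ≠ 0 := by positivity
    have d2 : E ^ 2 + 1 ≠ 0 := by positivity
    field_simp
  rw [htanh]
  have hMt : M = s ^ 2 * m := by rw [hst, ht]; field_simp
  rw [hMt, div_sub_div _ _ (by nlinarith : (1:ℝ) + m ≠ 0)
    (by nlinarith : (1:ℝ) + s ^ 2 * m ≠ 0),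
    div_le_div_iff₀ (by nlinarith) (by nlinarith)]
  nlinarith [mul_nonneg (sub_nonneg.mpr hs1.le) (sq_nonneg (s * m - 1)), sq_nonneg (s * m - 1)]

lemma cone_add_aux {C : Set V} (hC : IsProperCone C) {x y : V} (hx : x ∈ C) (hy : y ∈ C) :
    x + y ∈ C := by
  have h := hC.2.1 hx hy (by norm_num : (0:ℝ) ≤ 1/2) (by norm_num : (0:ℝ) ≤ 1/2) (by norm_num)
  have h2 := hC.2.2.1 2 (by norm_num) _ h
  have h3 : (2:ℝ) • ((1/2 : ℝ) • x + (1/2 : ℝ) • y) = x + y := by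
    rw [smul_add, smul_smul, smul_smul]; norm_num
  rwa [h3] at h2

lemma supRatio_mem_aux {C : Set V} (hC : IsProperCone C) {a b : V} (hb : b ∈ C) {M : ℝ}
    (hM : (M : EReal) = supRatio C a b) : M • b - a ∈ C := by
  set S := {l : ℝ | l • b - a ∈ C} with hSdef
  have hup : ∀ l ∈ S, ∀ l', l ≤ l' → l' ∈ S := by
    intro l hl l' hll
    have heq : l' • b - a = (l • b - a) + (l' - l) • b := by rw [sub_smul]; abel
    simp only [hSdef, Set.mem_setOf_eq] at hl ⊢
    rw [heq]
    exact cone_add_aux hC hl (hC.2.2.1 _ (by linarith) _ hb)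
  have happrox : ∀ ε : ℝ, 0 < ε → (M + ε) ∈ S := by
    intro ε hε
    by_contra hcon
    have hlb : ∀ l ∈ S, M + ε ≤ l := by
      intro l hl
      by_contra hlt
      exact hcon (hup l hl _ (le_of_not_ge hlt))
    have hle : ((M + ε : ℝ) : EReal) ≤ supRatio C a b := by
      apply le_sInf
      rintro x ⟨l, hl, rfl⟩
      simp only []
      exact_mod_cast hlb l hl
    rw [← hM] at hle
    have := EReal.coe_le_coe_iff.mp hle
    linarith
  have hcont : Continuous fun l : ℝ => l • b - a :=
    (continuous_id.smul continuous_const).sub continuous_const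
  have hclosed : IsClosed S := hC.1.preimage hcont
  have hM' : M ∈ closure S := by
    rw [Metric.mem_closure_iff]
    intro ε hε
    refine ⟨M + ε / 2, happrox _ (by linarith), ?_⟩
    rw [Real.dist_eq, show M - (M + ε / 2) = -(ε / 2) by ring, abs_neg,
      abs_of_nonneg (by linarith)]
    linarith
  exact hclosed.closure_subset hM'

lemma infRatio_mem_aux {C : Set V} (hC : IsProperCone C) {a b : V} (hb : b ∈ C) {m : ℝ}
    (hm : (m : EReal) = infRatio C a b) : a - m • b ∈ C := by
  set S := {l : ℝ | a - l • b ∈ C} with hSdef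
  have hdown : ∀ l ∈ S, ∀ l', l' ≤ l → l' ∈ S := by
    intro l hl l' hll
    have heq : a - l' • b = (a - l • b) + (l - l') • b := by rw [sub_smul]; abel
    simp only [hSdef, Set.mem_setOf_eq] at hl ⊢
    rw [heq]
    exact cone_add_aux hC hl (hC.2.2.1 _ (by linarith) _ hb)
  have happrox : ∀ ε : ℝ, 0 < ε → (m - ε) ∈ S := by
    intro ε hε
    by_contra hcon
    have hub : ∀ l ∈ S, l ≤ m - ε := by
      intro l hl
      by_contra hlt
      exact hcon (hdown l hl _ (le_of_not_ge hlt))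
    have hle : infRatio C a b ≤ ((m - ε : ℝ) : EReal) := by
      apply sSup_le
      rintro x ⟨l, hl, rfl⟩
      simp only []
      exact_mod_cast hub l hl
    rw [← hm] at hle
    have := EReal.coe_le_coe_iff.mp hle
    linarith
  have hcont : Continuous fun l : ℝ => a - l • b :=
    continuous_const.sub (continuous_id.smul continuous_const)
  have hclosed : IsClosed S := hC.1.preimage hcont
  have hm' : m ∈ closure S := by
    rw [Metric.mem_closure_iff]
    intro ε hε
    refine ⟨m - ε / 2, happrox _ (by linarith), ?_⟩
    rw [Real.dist_eq, show m - (m - ε / 2) = ε / 2 by ring, abs_of_nonneg (by linarith)]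
    linarith
  exact hclosed.closure_subset hm'

end AuxLemmas

open scoped Pointwise

/-- Stronger bounds for the base norm in terms of `sup_C` and `inf_C`. -/
theorem baseNorm_vs_supinf_bounds
    {V : Type*} [NormedAddCommGroup V] [InnerProductSpace ℝ V] [FiniteDimensional ℝ V]
    (C : Set V) (hC : IsProperCone C)
    (e : V) (he : e ∈ interior (dualConeSet C))
    (B : Set V) (hB : B = C ∩ {v : V | (inner ℝ e v : ℝ) = 1})
    (b₁ : V) (hb₁ : b₁ ∈ B) (b₂ : V) (hb₂ : b₂ ∈ B)
    (m M : ℝ) (hm : (m : EReal) = infRatio C b₁ b₂) (hM : (M : EReal) = supRatio C b₁ b₂)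
    (hm0 : 0 < m) (hmM : m < M) :
    (1 / 2) * baseNorm C e (b₁ - b₂) = negativity C e (b₁ - b₂) ∧
    negativity C e (b₁ - b₂) ≤ (M - 1) * (1 - m) / (M - m) ∧
    (M - 1) * (1 - m) / (M - m) ≤ 1 / (1 + m) - 1 / (1 + M) ∧
    1 / (1 + m) - 1 / (1 + M) ≤ tanhQuarter (hilbertDist C b₁ b₂) := by
  obtain ⟨hb₁C, hb₁e⟩ : b₁ ∈ C ∧ (inner ℝ e b₁ : ℝ) = 1 := by rw [hB] at hb₁; exact hb₁
  obtain ⟨hb₂C, hb₂e⟩ : b₂ ∈ C ∧ (inner ℝ e b₂ : ℝ) = 1 := by rw [hB] at hb₂; exact hb₂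
  have he' : ∀ c ∈ C, 0 ≤ (inner ℝ e c : ℝ) := interior_subset he
  have hL2 : b₁ - m • b₂ ∈ C := infRatio_mem_aux hC hb₂C hm
  have hL1 : M • b₂ - b₁ ∈ C := supRatio_mem_aux hC hb₂C hM
  have hm1 : m ≤ 1 := by
    have := he' _ hL2
    rw [inner_sub_right, real_inner_smul_right, hb₁e, hb₂e] at this
    linarith
  have hM1 : 1 ≤ M := by
    have := he' _ hL1
    rw [inner_sub_right, real_inner_smul_right, hb₁e, hb₂e] at this
    linarith
  have hkey : ∀ cp ∈ C, ∀ cm ∈ C, b₁ - b₂ = cp - cm →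
      (inner ℝ e cp : ℝ) = (inner ℝ e cm : ℝ) := by
    intro cp _ cm _ hd
    have h1 : (inner ℝ e (b₁ - b₂) : ℝ) = inner ℝ e cp - inner ℝ e cm := by
      rw [hd, inner_sub_right]
    rw [inner_sub_right, hb₁e, hb₂e] at h1
    linarith
  refine ⟨?_, ?_, algIneq_aux hm0 hmM, ?_⟩
  · have hsetEq : {r : ℝ | ∃ cp ∈ C, ∃ cm ∈ C, b₁ - b₂ = cp - cm ∧
        r = (inner ℝ e cp : ℝ) + (inner ℝ e cm : ℝ)} =
        (2:ℝ) • {r : ℝ | ∃ cp ∈ C, ∃ cm ∈ C, b₁ - b₂ = cp - cm ∧ r = (inner ℝ e cm : ℝ)} := by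
      ext r
      constructor
      · rintro ⟨cp, hcp, cm, hcm, hd, rfl⟩
        refine ⟨(inner ℝ e cm : ℝ), ⟨cp, hcp, cm, hcm, hd, rfl⟩, ?_⟩
        simp only [smul_eq_mul]
        have := hkey cp hcp cm hcm hd
        linarith
      · rintro ⟨s, ⟨cp, hcp, cm, hcm, hd, rfl⟩, rfl⟩
        refine ⟨cp, hcp, cm, hcm, hd, ?_⟩
        simp only [smul_eq_mul]
        have := hkey cp hcp cm hcm hd
        linarith
    show (1 / 2) * sInf _ = sInf _
    rw [hsetEq, Real.sInf_smul_of_nonneg (by norm_num), smul_eq_mul]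
    ring
  · have hMm : (0:ℝ) < M - m := by linarith
    have hα : (0:ℝ) ≤ (M - 1) / (M - m) := div_nonneg (by linarith) hMm.le
    have hβ : (0:ℝ) ≤ (1 - m) / (M - m) := div_nonneg (by linarith) hMm.le
    have hcp : ((M - 1) / (M - m)) • (b₁ - m • b₂) ∈ C := hC.2.2.1 _ hα _ hL2
    have hcm : ((1 - m) / (M - m)) • (M • b₂ - b₁) ∈ C := hC.2.2.1 _ hβ _ hL1
    have hdec : b₁ - b₂ =
        ((M - 1) / (M - m)) • (b₁ - m • b₂) - ((1 - m) / (M - m)) • (M • b₂ - b₁) := by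
      match_scalars <;> field_simp <;> ring
    have hval : (inner ℝ e (((1 - m) / (M - m)) • (M • b₂ - b₁)) : ℝ) =
        (M - 1) * (1 - m) / (M - m) := by
      rw [real_inner_smul_right, inner_sub_right, real_inner_smul_right, hb₁e, hb₂e]
      field_simp
    apply csInf_le
    · refine ⟨0, ?_⟩
      rintro r ⟨cp, hcp', cm, hcm', -, rfl⟩
      exact he' _ hcm'
    · exact ⟨_, hcp, _, hcm, hdec, hval.symm⟩
  · have hS' : supRatio C b₂ b₁ = ((m⁻¹ : ℝ) : EReal) := by
      apply le_antisymm
      · apply sInf_le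
        refine ⟨m⁻¹, ?_, rfl⟩
        show m⁻¹ • b₁ - b₂ ∈ C
        have h1 : m⁻¹ • b₁ - b₂ = m⁻¹ • (b₁ - m • b₂) := by
          rw [smul_sub, smul_smul, inv_mul_cancel₀ hm0.ne', one_smul]
        rw [h1]
        exact hC.2.2.1 _ (by positivity) _ hL2
      · apply le_sInf
        rintro x ⟨l, hl, rfl⟩
        simp only [Set.mem_setOf_eq] at hl
        have hl1 : 1 ≤ l := by
          have := he' _ hl
          rw [inner_sub_right, real_inner_smul_right, hb₁e, hb₂e] at this
          linarith
        have hl0 : 0 < l := lt_of_lt_of_le one_pos hl1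
        have hmem2 : b₁ - l⁻¹ • b₂ ∈ C := by
          have h2 : b₁ - l⁻¹ • b₂ = l⁻¹ • (l • b₁ - b₂) := by
            rw [smul_sub, smul_smul, inv_mul_cancel₀ hl0.ne', one_smul]
          rw [h2]
          exact hC.2.2.1 _ (by positivity) _ hl
        have hle : ((l⁻¹ : ℝ) : EReal) ≤ infRatio C b₁ b₂ := le_sSup ⟨l⁻¹, hmem2, rfl⟩
        rw [← hm] at hle
        have h3 : l⁻¹ ≤ m := EReal.coe_le_coe_iff.mp hle
        have h4 : m⁻¹ ≤ l := by
          have := inv_anti₀ (inv_pos.mpr hl0) h3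
          rwa [inv_inv] at this
        simp only []
        exact_mod_cast h4
    have hhd : hilbertDist C b₁ b₂ = ((Real.log (M * m⁻¹) : ℝ) : EReal) := by
      simp only [hilbertDist, ← hM, hS']
      rw [if_neg (by simp)]
      simp [EReal.toReal_coe]
    rw [hhd, tanhQuarter, if_neg (EReal.coe_ne_top _), EReal.toReal_coe]
    exact tanhBound_aux hm0 hmM

end
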